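/- Let q be a prime power, d a divisor of q-1, r a positive integer with 1 ≤ r < (q-1)/d, and h(x) a polynomial over F_q. The polynomial f(x) = x^r · h(x^{(q-1)/d}) is a permutation polynomial of F_q if and only if gcd(r, (q-1)/d) = 1 and the map x ↦ x^r · h(x)^{(q-1)/d} permutes the set μ_d of d-th roots of unity in F_q. -/

import Mathlib

/-- Criterion of Park–Lee / Zieve: `x^r h(x^{(q-1)/d})` is a permutation polynomial of
`F_q` iff `gcd(r,(q-1)/d)=1` and `x ↦ x^r h(x)^{(q-1)/d}` permutes the `d`-th roots of unity. -/
theorem stmt_0 {F : Type*} [Field F] [Fintype F] (q : ℕ) (hq : Fintype.card F = q)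
    (d r : ℕ) (hd : d ∣ q - 1) (hr1 : 1 ≤ r) (hr2 : r < (q - 1) / d)
    (h : Polynomial F) :
    Function.Bijective (fun x : F => x ^ r * h.eval (x ^ ((q - 1) / d))) ↔
      (Nat.gcd r ((q - 1) / d) = 1 ∧
        Set.BijOn (fun x : F => x ^ r * (h.eval x) ^ ((q - 1) / d))
          {x : F | x ^ d = 1} {x : F | x ^ d = 1}) := by
  classical
  set s := (q - 1) / d with hsdef
  set f : F → F := fun x => x ^ r * h.eval (x ^ s) with hf
  set g : F → F := fun x => x ^ r * (h.eval x) ^ s with hg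
  set μ : Set F := {x : F | x ^ d = 1} with hμ
  have hs1 : 1 < s := lt_of_le_of_lt hr1 hr2
  have hs0 : s ≠ 0 := Nat.ne_zero_of_lt hs1
  have hr0 : r ≠ 0 := Nat.one_le_iff_ne_zero.mp hr1
  have hds : d * s = q - 1 := Nat.mul_div_cancel' hd
  have hd0 : d ≠ 0 := fun h0 => hs0 (by rw [hsdef, h0, Nat.div_zero])
  have hq1 : 1 ≤ q - 1 := hds ▸ Nat.one_le_iff_ne_zero.mpr (Nat.mul_ne_zero hd0 hs0)
  have hpow : ∀ x : F, x ≠ 0 → x ^ (q - 1) = 1 := by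
    intro x hx
    have := FiniteField.pow_card_sub_one_eq_one x hx
    rwa [hq] at this
  have keyA : ∀ x : F, (f x) ^ s = g (x ^ s) := by
    intro x
    simp only [hf, hg, mul_pow, ← pow_mul]
    ring_nf
  have keyB : ∀ x : F, x ≠ 0 → (x ^ s) ^ d = 1 := by
    intro x hx
    rw [← pow_mul, mul_comm s d, hds]
    exact hpow x hx
  have hf0 : f 0 = 0 := by simp [hf, zero_pow hr0]
  obtain ⟨gen, hgen⟩ := IsCyclic.exists_generator (α := Fˣ)
  have hcardu : Fintype.card Fˣ = q - 1 := by rw [Fintype.card_units, hq]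
  have hordgen : orderOf gen = q - 1 := by
    rw [orderOf_eq_card_of_forall_mem_zpowers hgen, Nat.card_eq_fintype_card, hcardu]
  have keyC : ∀ a : F, a ^ d = 1 → ∃ x : F, x ≠ 0 ∧ x ^ s = a := by
    intro a ha
    have ha0 : a ≠ 0 := by
      intro h0; rw [h0, zero_pow hd0] at ha; exact zero_ne_one ha
    set u : Fˣ := Units.mk0 a ha0 with hu
    have hud : u ^ d = 1 := by
      ext; push_cast [hu]; exact ha
    obtain ⟨k, hk⟩ := (mem_powers_iff_mem_zpowers).mpr (hgen u)
    have hk' : gen ^ k = u := hk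
    have hgkd : gen ^ (k * d) = 1 := by rw [pow_mul, hk', hud]
    have hdvd : d * s ∣ k * d := by
      rw [hds, ← hordgen]; exact orderOf_dvd_of_pow_eq_one hgkd
    obtain ⟨c, hc⟩ := hdvd
    have hk2 : k = s * c :=
      Nat.eq_of_mul_eq_mul_left (Nat.pos_of_ne_zero hd0)
        (by rw [mul_comm d k, hc, mul_assoc])
    refine ⟨((gen ^ c : Fˣ) : F), Units.ne_zero _, ?_⟩
    have hgc : (gen ^ c) ^ s = u := by rw [← pow_mul, mul_comm c s, ← hk2, hk']
    calc ((gen ^ c : Fˣ) : F) ^ s = (((gen ^ c) ^ s : Fˣ) : F) := by push_cast; ring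
    _ = a := by rw [hgc, hu]; rfl
  have keyD : Nat.gcd r s = 1 → ∀ x y : F, x ≠ 0 → y ≠ 0 → x ^ r = y ^ r →
      x ^ s = y ^ s → x = y := by
    intro hgcd x y hx hy hxr hxs
    set u : Fˣ := Units.mk0 x hx * (Units.mk0 y hy)⁻¹ with hu
    have hur : u ^ r = 1 := by
      ext
      push_cast [hu, Units.val_mk0]
      rw [mul_pow, hxr, inv_pow, mul_inv_cancel₀ (pow_ne_zero _ hy)]
    have hus : u ^ s = 1 := by
      ext
      push_cast [hu, Units.val_mk0]
      rw [mul_pow, hxs, inv_pow, mul_inv_cancel₀ (pow_ne_zero _ hy)]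
    have hou : orderOf u ∣ Nat.gcd r s :=
      Nat.dvd_gcd (orderOf_dvd_of_pow_eq_one hur) (orderOf_dvd_of_pow_eq_one hus)
    rw [hgcd, Nat.dvd_one, orderOf_eq_one_iff] at hou
    have heq : (Units.mk0 x hx : Fˣ) = Units.mk0 y hy := mul_inv_eq_one.mp (hu ▸ hou)
    have := congrArg Units.val heq
    simpa using this
  constructor
  · rintro hbij
    have hinj := hbij.injective
    have hfne : ∀ x : F, x ≠ 0 → f x ≠ 0 := by
      intro x hx h0
      exact hx (hinj (h0.trans hf0.symm))
    have hgcd : Nat.gcd r s = 1 := by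
      by_contra hne
      set e := Nat.gcd r s with he
      have he0 : e ≠ 0 := by
        intro h0
        exact hr0 (Nat.eq_zero_of_gcd_eq_zero_left h0)
      have he2 : 2 ≤ e := by omega
      have hes : e ∣ s := Nat.gcd_dvd_right r s
      have her : e ∣ r := Nat.gcd_dvd_left r s
      have heq : e ∣ q - 1 := hes.trans ⟨d, by rw [← hds, Nat.mul_comm]⟩
      set ζ : Fˣ := gen ^ ((q - 1) / e) with hζ
      have hζe : ζ ^ e = 1 := by
        rw [hζ, ← pow_mul, Nat.div_mul_cancel heq, ← hordgen, pow_orderOf_eq_one]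
      have hζne : ζ ≠ 1 := by
        intro h1
        have hdv : orderOf gen ∣ (q - 1) / e := orderOf_dvd_of_pow_eq_one h1
        rw [hordgen] at hdv
        have hlt : (q - 1) / e < q - 1 := Nat.div_lt_self (by omega) (by omega)
        have hpos : 0 < (q - 1) / e := Nat.div_pos (Nat.le_of_dvd (by omega) heq) (by omega)
        have := Nat.le_of_dvd hpos hdv
        omega
      have hζr : (ζ : F) ^ r = 1 := by
        obtain ⟨c, hc⟩ := her
        have h2 : ζ ^ r = 1 := by rw [hc, pow_mul, hζe, one_pow]
        have h3 := congrArg Units.val h2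
        rw [Units.val_pow_eq_pow_val, Units.val_one] at h3
        exact h3
      have hζs : (ζ : F) ^ s = 1 := by
        obtain ⟨c, hc⟩ := hes
        have h2 : ζ ^ s = 1 := by rw [hc, pow_mul, hζe, one_pow]
        have h3 := congrArg Units.val h2
        rw [Units.val_pow_eq_pow_val, Units.val_one] at h3
        exact h3
      have hfeq : f (ζ : F) = f 1 := by
        simp only [hf, hζr, hζs, one_pow]
      have := hinj hfeq
      exact hζne (Units.ext (by simpa using this))
    have hmaps : Set.MapsTo g μ μ := by
      intro a ha
      rw [hμ, Set.mem_setOf_eq] at ha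
      obtain ⟨x, hx, hxa⟩ := keyC a ha
      have hga : g a = (f x) ^ s := by rw [← hxa, keyA]
      show g a ∈ {x : F | x ^ d = 1}
      rw [Set.mem_setOf_eq, hga]
      exact keyB (f x) (hfne x hx)
    have hsurj : Set.SurjOn g μ μ := by
      intro b hb
      rw [hμ, Set.mem_setOf_eq] at hb
      obtain ⟨y, hy, hyb⟩ := keyC b hb
      obtain ⟨x, hxy⟩ := hbij.surjective y
      have hx0 : x ≠ 0 := by
        intro h0; rw [h0, hf0] at hxy; exact hy hxy.symm
      refine ⟨x ^ s, keyB x hx0, ?_⟩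
      show g (x ^ s) = b
      rw [← keyA, hxy, hyb]
    exact ⟨hgcd, (μ.toFinite.surjOn_iff_bijOn_of_mapsTo hmaps).mp hsurj⟩
  · rintro ⟨hgcd, hbij⟩
    have hgne : ∀ a : F, a ^ d = 1 → g a ≠ 0 := by
      intro a ha h0
      have hm := hbij.mapsTo ha
      rw [hμ, Set.mem_setOf_eq, h0, zero_pow hd0] at hm
      exact zero_ne_one hm
    have hfne : ∀ x : F, x ≠ 0 → f x ≠ 0 := by
      intro x hx h0
      have : g (x ^ s) = 0 := by rw [← keyA, h0, zero_pow hs0]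
      exact hgne _ (keyB x hx) this
    rw [Fintype.bijective_iff_injective_and_card]
    refine ⟨?_, rfl⟩
    intro x y hxy
    rcases eq_or_ne x 0 with hx | hx
    · rcases eq_or_ne y 0 with hy | hy
      · rw [hx, hy]
      · exfalso; rw [hx, hf0] at hxy; exact hfne y hy hxy.symm
    rcases eq_or_ne y 0 with hy | hy
    · exfalso; rw [hy, hf0] at hxy; exact hfne x hx hxy
    have hgs : g (x ^ s) = g (y ^ s) := by rw [← keyA, ← keyA, hxy]
    have hxs : x ^ s = y ^ s := hbij.injOn (keyB x hx) (keyB y hy) hgs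
    have hh : h.eval (x ^ s) ≠ 0 := by
      intro h0
      apply hfne x hx
      show x ^ r * h.eval (x ^ s) = 0
      rw [h0, mul_zero]
    have hxr : x ^ r = y ^ r := by
      have heq2 : x ^ r * h.eval (x ^ s) = y ^ r * h.eval (x ^ s) := by
        calc x ^ r * h.eval (x ^ s) = f x := rfl
        _ = f y := hxy
        _ = y ^ r * h.eval (x ^ s) := by show y ^ r * h.eval (y ^ s) = _; rw [hxs]
      exact mul_right_cancel₀ hh heq2
    exact keyD hgcd x y hx hy hxr hxs
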